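/- arXiv:1505.08133 — 5 statements merged into one kernel-verified Lean document; each statement's English description precedes it below -/
import Mathlib

section
/- For a connected finite undirected graph G without self-loops or multiple edges on N ≥ 2 vertices, the second smallest eigenvalue a(G) of the Laplacian L(G) satisfies a(G) ≥ 2(1 - cos(π/N)). -/
open Finset

namespace FiedlerAux


lemma orthogonality (m : ℕ) (ω : ℂ) (hprim : IsPrimitiveRoot ω m)
    (k k' : ℕ) (hk : k < m) (hk' : k' < m) :
    ∑ j ∈ range m, (ω ^ k * (starRingEnd ℂ) (ω ^ k')) ^ j
      = if k = k' then (m : ℂ) else 0 := by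
  have hm : 0 < m := by omega
  have hω0 : ω ≠ 0 := hprim.ne_zero (by omega)
  have hω1 : ‖ω‖ = 1 := Complex.norm_eq_one_of_pow_eq_one
    (by simpa using hprim.pow_eq_one) (by omega)
  have habs : ‖ω ^ k'‖ = 1 := by rw [norm_pow, hω1, one_pow]
  have hconj : (starRingEnd ℂ) (ω ^ k') = (ω ^ k')⁻¹ := (Complex.inv_eq_conj habs).symm
  have hωm : ω ^ m = 1 := hprim.pow_eq_one
  set ζ : ℂ := ω ^ k * (starRingEnd ℂ) (ω ^ k') with hζ
  have hζm : ζ ^ m = 1 := by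
    rw [hζ, hconj, mul_pow, inv_pow, ← pow_mul, ← pow_mul, mul_comm k m, mul_comm k' m,
      pow_mul, pow_mul, hωm, one_pow, one_pow, inv_one, mul_one]
  rcases eq_or_ne k k' with h | h
  · subst h
    rw [if_pos rfl, hζ, hconj, mul_inv_cancel₀ (pow_ne_zero _ hω0)]
    simp
  · rw [if_neg h]
    have hζ1 : ζ ≠ 1 := by
      intro hone
      apply h
      apply hprim.pow_inj hk hk'
      rw [hζ, hconj] at hone
      field_simp at hone
      exact hone
    rw [geom_sum_eq hζ1, hζm, sub_self, zero_div]

lemma parseval (m : ℕ) (ω : ℂ) (hprim : IsPrimitiveRoot ω m) (x : ℕ → ℝ) :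
    ∑ j ∈ range m, Complex.normSq (∑ k ∈ range m, (x k : ℂ) * (ω ^ k) ^ j)
      = m * ∑ k ∈ range m, x k ^ 2 := by
  have key : ∑ j ∈ range m, (∑ k ∈ range m, (x k : ℂ) * (ω ^ k) ^ j)
      * (starRingEnd ℂ) (∑ k ∈ range m, (x k : ℂ) * (ω ^ k) ^ j)
      = (m : ℂ) * ∑ k ∈ range m, (x k : ℂ) ^ 2 := by
    have expand : ∀ j ∈ range m, (∑ k ∈ range m, (x k : ℂ) * (ω ^ k) ^ j)
        * (starRingEnd ℂ) (∑ k ∈ range m, (x k : ℂ) * (ω ^ k) ^ j)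
        = ∑ k ∈ range m, ∑ k' ∈ range m,
            (x k : ℂ) * (x k' : ℂ) * (ω ^ k * (starRingEnd ℂ) (ω ^ k')) ^ j := by
      intro j _
      rw [map_sum, sum_mul_sum]
      refine sum_congr rfl fun k _ => sum_congr rfl fun k' _ => ?_
      rw [map_mul, Complex.conj_ofReal, map_pow, mul_pow]
      ring
    rw [sum_congr rfl expand, sum_comm]
    have : ∀ k ∈ range m, ∑ j ∈ range m, ∑ k' ∈ range m,
        (x k : ℂ) * (x k') * (ω ^ k * (starRingEnd ℂ) (ω ^ k')) ^ j
        = (m : ℂ) * (x k : ℂ) ^ 2 := by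
      intro k hk
      rw [sum_comm]
      have : ∀ k' ∈ range m, ∑ j ∈ range m,
          (x k : ℂ) * (x k') * (ω ^ k * (starRingEnd ℂ) (ω ^ k')) ^ j
          = if k = k' then (m : ℂ) * (x k : ℂ) ^ 2 else 0 := by
        intro k' hk'
        rw [← mul_sum, orthogonality m ω hprim k k' (mem_range.mp hk) (mem_range.mp hk')]
        split
        · rename_i hh; subst hh; ring
        · simp
      rw [sum_congr rfl this, sum_ite_eq (range m) k (fun _ => (m : ℂ) * (x k : ℂ) ^ 2),
        if_pos hk]
    rw [sum_congr rfl this, ← mul_sum]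
  simp_rw [Complex.mul_conj] at key
  exact_mod_cast key

lemma normSq_inv_pow_sub_one (m : ℕ) (j : ℕ) :
    Complex.normSq ((Complex.exp (2 * Real.pi * Complex.I / m))⁻¹ ^ j - 1)
      = 2 - 2 * Real.cos (2 * Real.pi * j / m) := by
  set θ : ℝ := 2 * Real.pi * j / m with hθ
  have h1 : (Complex.exp (2 * Real.pi * Complex.I / m))⁻¹ ^ j
      = Complex.exp ((-θ : ℝ) * Complex.I) := by
    rw [← Complex.exp_neg, ← Complex.exp_nat_mul]
    congr 1
    rw [hθ]
    push_cast
    ring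
  rw [h1, Complex.exp_mul_I, ← Complex.ofReal_cos, ← Complex.ofReal_sin,
    Real.cos_neg, Real.sin_neg, Complex.normSq_apply]
  simp only [Complex.add_re, Complex.add_im, Complex.sub_re, Complex.sub_im,
    Complex.ofReal_re, Complex.ofReal_im, Complex.mul_re, Complex.mul_im,
    Complex.I_re, Complex.I_im, Complex.one_re, Complex.one_im, Complex.neg_re,
    Complex.neg_im]
  nlinarith [Real.sin_sq_add_cos_sq θ]

lemma cycle_wirtinger (m : ℕ) (hm : 2 ≤ m) (z : ℕ → ℝ)
    (hz : ∑ k ∈ range m, z k = 0) :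
    2 * (1 - Real.cos (2 * Real.pi / m)) * ∑ k ∈ range m, z k ^ 2 ≤
      ∑ k ∈ range m, (z ((k + 1) % m) - z k) ^ 2 := by
  have hmR : (0:ℝ) < m := by positivity
  set ω : ℂ := Complex.exp (2 * Real.pi * Complex.I / m) with hωdef
  have hprim : IsPrimitiveRoot ω m := Complex.isPrimitiveRoot_exp m (by omega)
  have hω0 : ω ≠ 0 := hprim.ne_zero (by omega)
  have hωm : ω ^ m = 1 := hprim.pow_eq_one
  set F : ℕ → ℂ := fun j => ∑ k ∈ range m, (z k : ℂ) * (ω ^ k) ^ j with hF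
  set w : ℕ → ℝ := fun k => z ((k + 1) % m) - z k with hw
  have hinv1 : ∀ a, a < m → ((a + 1) % m + m - 1) % m = a := by
    intro a ha
    rcases Nat.lt_or_ge (a + 1) m with h | h
    · rw [Nat.mod_eq_of_lt h, show a + 1 + m - 1 = a + m by omega, Nat.add_mod_right,
        Nat.mod_eq_of_lt ha]
    · rw [show a + 1 = m by omega, Nat.mod_self, show 0 + m - 1 = a by omega,
        Nat.mod_eq_of_lt ha]
  have hinv2 : ∀ a, a < m → ((a + m - 1) % m + 1) % m = a := by
    intro a ha
    rcases eq_or_ne a 0 with rfl | h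
    · rw [show 0 + m - 1 = m - 1 by omega, Nat.mod_eq_of_lt (show m - 1 < m by omega),
        show m - 1 + 1 = m by omega, Nat.mod_self]
    · rw [show a + m - 1 = (a - 1) + m by omega, Nat.add_mod_right,
        Nat.mod_eq_of_lt (show a - 1 < m by omega), show a - 1 + 1 = a by omega,
        Nat.mod_eq_of_lt ha]
  -- shift identity
  have hshift : ∀ j : ℕ, (∑ k ∈ range m, (w k : ℂ) * (ω ^ k) ^ j) = (ω⁻¹ ^ j - 1) * F j := by
    intro j
    have hre : ∑ k ∈ range m, (z ((k + 1) % m) : ℂ) * (ω ^ k) ^ j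
        = ∑ k ∈ range m, (z k : ℂ) * (ω ^ k) ^ j * ω⁻¹ ^ j := by
      refine Finset.sum_nbij' (fun k => (k + 1) % m) (fun k => (k + m - 1) % m) ?_ ?_ ?_ ?_ ?_
      · intro a ha; exact mem_range.mpr (Nat.mod_lt _ (by omega))
      · intro a ha; exact mem_range.mpr (Nat.mod_lt _ (by omega))
      · intro a ha; exact hinv1 a (mem_range.mp ha)
      · intro a ha; exact hinv2 a (mem_range.mp ha)
      · intro a ha
        have ha' : a < m := mem_range.mp ha
        have hpow : (ω ^ ((a + 1) % m)) ^ j * ω⁻¹ ^ j = (ω ^ a) ^ j := by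
          have h1 : ω ^ ((a + 1) % m) = ω ^ (a + 1) := by
            conv_rhs => rw [← Nat.div_add_mod (a + 1) m]
            rw [pow_add, pow_mul, hωm, one_pow, one_mul]
          rw [h1, pow_succ, mul_pow, mul_assoc, ← mul_pow, mul_inv_cancel₀ hω0, one_pow, mul_one]
        show (z ((a + 1) % m) : ℂ) * (ω ^ a) ^ j
            = (z ((a + 1) % m) : ℂ) * (ω ^ ((a + 1) % m)) ^ j * ω⁻¹ ^ j
        rw [mul_assoc, hpow]
    calc ∑ k ∈ range m, (w k : ℂ) * (ω ^ k) ^ j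
        = ∑ k ∈ range m, ((z ((k + 1) % m) : ℂ) * (ω ^ k) ^ j - (z k : ℂ) * (ω ^ k) ^ j) := by
          refine sum_congr rfl fun k _ => ?_
          have : w k = z ((k + 1) % m) - z k := rfl
          rw [this]
          push_cast
          ring
      _ = (∑ k ∈ range m, (z ((k + 1) % m) : ℂ) * (ω ^ k) ^ j) - F j := by
          rw [sum_sub_distrib, hF]
      _ = (∑ k ∈ range m, (z k : ℂ) * (ω ^ k) ^ j * ω⁻¹ ^ j) - F j := by rw [hre]
      _ = (ω⁻¹ ^ j - 1) * F j := by rw [← sum_mul, hF]; ring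
  have hParw := parseval m ω hprim w
  have hParz := parseval m ω hprim z
  have hF0 : F 0 = 0 := by
    rw [hF]
    simp only [pow_zero, mul_one]
    exact_mod_cast hz
  -- coefficient bound
  have hcoef : ∀ j, 1 ≤ j → j < m →
      Real.cos (2 * Real.pi * j / m) ≤ Real.cos (2 * Real.pi / m) := by
    intro j hj1 hjm
    have hπ := Real.pi_pos
    have hb : 2 * Real.pi / m ≤ 2 * Real.pi * j / m := by
      rw [div_le_div_iff₀ hmR hmR]
      have hj1R : (1:ℝ) ≤ j := by exact_mod_cast hj1
      nlinarith [mul_le_mul_of_nonneg_right (mul_le_mul_of_nonneg_left hj1R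
        (by positivity : (0:ℝ) ≤ 2 * Real.pi)) hmR.le]
    have hbase : 0 < 2 * Real.pi / m := by positivity
    have hbaseπ : 2 * Real.pi / m ≤ Real.pi := by
      rw [div_le_iff₀ hmR]
      nlinarith [mul_le_mul_of_nonneg_left (by exact_mod_cast hm : (2:ℝ) ≤ m) Real.pi_pos.le]
    rcases le_or_gt (2 * Real.pi * j / m) Real.pi with h | h
    · exact Real.cos_le_cos_of_nonneg_of_le_pi (le_of_lt hbase) h hb
    · have heq : Real.cos (2 * Real.pi * j / m)
          = Real.cos (2 * Real.pi - 2 * Real.pi * j / m) := by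
        rw [Real.cos_sub]
        simp [Real.cos_two_pi, Real.sin_two_pi]
      rw [heq]
      apply Real.cos_le_cos_of_nonneg_of_le_pi hbase.le (by linarith)
      have hjm' : (j : ℝ) + 1 ≤ m := by exact_mod_cast hjm
      rw [le_sub_iff_add_le, ← add_div, div_le_iff₀ hmR]
      nlinarith [mul_le_mul_of_nonneg_left hjm' (by positivity : (0:ℝ) ≤ 2 * Real.pi)]
  -- main chain
  have main : 2 * (1 - Real.cos (2 * Real.pi / m)) * ((m : ℝ) * ∑ k ∈ range m, z k ^ 2)
      ≤ (m : ℝ) * ∑ k ∈ range m, w k ^ 2 := by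
    rw [← hParw, ← hParz]
    have step1 : ∀ j ∈ range m, Complex.normSq (∑ k ∈ range m, (w k : ℂ) * (ω ^ k) ^ j)
        = (2 - 2 * Real.cos (2 * Real.pi * j / m)) * Complex.normSq (F j) := by
      intro j _
      rw [hshift j, Complex.normSq_mul, hωdef, normSq_inv_pow_sub_one]
    rw [sum_congr rfl step1, mul_sum]
    apply sum_le_sum
    intro j hj
    rcases eq_or_ne j 0 with rfl | hj0
    · have hz' : (∑ x ∈ range m, (z x : ℂ)) = 0 := by exact_mod_cast hz
      rw [hF0]
      simp [hz']
    · have h1 : 1 ≤ j := by omega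
      have h2 : j < m := mem_range.mp hj
      have := hcoef j h1 h2
      nlinarith [Complex.normSq_nonneg (F j)]
  have hfin : 2 * (1 - Real.cos (2 * Real.pi / m)) * ∑ k ∈ range m, z k ^ 2
      ≤ ∑ k ∈ range m, w k ^ 2 := by
    have h := main
    rw [show 2 * (1 - Real.cos (2 * Real.pi / m)) * ((m : ℝ) * ∑ k ∈ range m, z k ^ 2)
        = (m : ℝ) * (2 * (1 - Real.cos (2 * Real.pi / m)) * ∑ k ∈ range m, z k ^ 2) by ring]
        at h
    exact le_of_mul_le_mul_left h hmR
  exact hfin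




lemma path_wirtinger (n : ℕ) (hn : 2 ≤ n) (y : ℕ → ℝ)
    (hy : ∑ k ∈ range n, y k = 0) :
    2 * (1 - Real.cos (Real.pi / n)) * ∑ k ∈ range n, y k ^ 2 ≤
      ∑ k ∈ range (n - 1), (y (k + 1) - y k) ^ 2 := by
  set z : ℕ → ℝ := fun k => if k < n then y k else y (2 * n - 1 - k) with hzdef
  have hz1 : ∀ k, k < n → z k = y k := by
    intro k hk; simp only [hzdef]; rw [if_pos hk]
  have hz2 : ∀ k, n ≤ k → z k = y (2 * n - 1 - k) := by
    intro k hk; simp only [hzdef]; rw [if_neg (by omega)]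
  have peel : ∀ F : ℕ → ℝ, ∑ k ∈ range n, F k = ∑ k ∈ range (n - 1), F k + F (n - 1) := by
    intro F
    conv_lhs => rw [show n = n - 1 + 1 by omega]
    exact sum_range_succ F (n - 1)
  have hsplit : ∀ f : ℝ → ℝ, ∑ k ∈ range (2 * n), f (z k)
      = ∑ k ∈ range n, f (y k) + ∑ k ∈ range n, f (y (n - 1 - k)) := by
    intro f
    rw [two_mul, sum_range_add]
    congr 1
    · exact sum_congr rfl fun k hk => by rw [hz1 k (mem_range.mp hk)]
    · refine sum_congr rfl fun k hk => ?_
      have hk' : k < n := mem_range.mp hk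
      rw [hz2 (n + k) (by omega), show 2 * n - 1 - (n + k) = n - 1 - k by omega]
  have hzsum : ∑ k ∈ range (2 * n), z k = 0 := by
    have h := hsplit (fun t => t)
    rw [h, sum_range_reflect (fun k => y k) n, hy, add_zero]
  have hzsq : ∑ k ∈ range (2 * n), z k ^ 2 = 2 * ∑ k ∈ range n, y k ^ 2 := by
    have h := hsplit (fun t => t ^ 2)
    rw [h, sum_range_reflect (fun k => y k ^ 2) n, two_mul]
  -- edge sums
  have hedge : ∑ k ∈ range (2 * n), (z ((k + 1) % (2 * n)) - z k) ^ 2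
      = 2 * ∑ k ∈ range (n - 1), (y (k + 1) - y k) ^ 2 := by
    rw [two_mul, sum_range_add]
    have hA : ∑ k ∈ range n, (z ((k + 1) % (n + n)) - z k) ^ 2
        = ∑ k ∈ range (n - 1), (y (k + 1) - y k) ^ 2 := by
      rw [peel (fun k => (z ((k + 1) % (n + n)) - z k) ^ 2)]
      have hlast : (z ((n - 1 + 1) % (n + n)) - z (n - 1)) ^ 2 = 0 := by
        rw [show n - 1 + 1 = n by omega, Nat.mod_eq_of_lt (by omega), hz2 n (le_refl n),
          show 2 * n - 1 - n = n - 1 by omega, hz1 (n - 1) (by omega)]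
        ring
      rw [hlast, add_zero]
      refine sum_congr rfl fun k hk => ?_
      have hk' : k < n - 1 := mem_range.mp hk
      rw [Nat.mod_eq_of_lt (by omega), hz1 (k + 1) (by omega), hz1 k (by omega)]
    have hB : ∑ k ∈ range n, (z ((n + k + 1) % (n + n)) - z (n + k)) ^ 2
        = ∑ k ∈ range (n - 1), (y (k + 1) - y k) ^ 2 := by
      rw [peel (fun k => (z ((n + k + 1) % (n + n)) - z (n + k)) ^ 2)]
      have hlast : (z ((n + (n - 1) + 1) % (n + n)) - z (n + (n - 1))) ^ 2 = 0 := by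
        rw [show n + (n - 1) + 1 = n + n by omega, Nat.mod_self, hz1 0 (by omega),
          hz2 (n + (n - 1)) (by omega), show 2 * n - 1 - (n + (n - 1)) = 0 by omega]
        ring
      rw [hlast, add_zero, ← sum_range_reflect (fun k => (y (k + 1) - y k) ^ 2) (n - 1)]
      refine sum_congr rfl fun k hk => ?_
      have hk' : k < n - 1 := mem_range.mp hk
      rw [Nat.mod_eq_of_lt (by omega), hz2 (n + k + 1) (by omega), hz2 (n + k) (by omega),
        show 2 * n - 1 - (n + k + 1) = n - 2 - k by omega,
        show 2 * n - 1 - (n + k) = n - 1 - k by omega,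
        show n - 1 - 1 - k = n - 2 - k by omega,
        show n - 2 - k + 1 = n - 1 - k by omega]
      ring
    rw [hA, hB]
    ring
  have hcos : Real.cos (2 * Real.pi / (2 * n : ℕ)) = Real.cos (Real.pi / n) := by
    have hnR : (n : ℝ) ≠ 0 := by positivity
    congr 1
    push_cast
    field_simp
  have hmain := cycle_wirtinger (2 * n) (by omega) z hzsum
  rw [hzsq, hedge, hcos] at hmain
  linarith


end FiedlerAux

/-- Fiedler's bound: for a connected finite simple undirected graph on `N ≥ 2`
vertices, every nonzero eigenvalue of the Laplacian (in particular the algebraic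
connectivity, the second smallest eigenvalue) is at least `2 (1 - cos (π / N))`. -/
theorem algebraic_connectivity_ge_fiedler_bound
    {N : ℕ} (hN : 2 ≤ N) (G : SimpleGraph (Fin N)) [DecidableRel G.Adj]
    (hconn : G.Connected)
    (μ : ℝ) (v : Fin N → ℝ) (hv : v ≠ 0)
    (heig : (G.lapMatrix ℝ).mulVec v = μ • v) (hμ : μ ≠ 0) :
    2 * (1 - Real.cos (Real.pi / N)) ≤ μ := by
  classical
  have hNpos : 0 < N := by omega
  have hS : 0 < ∑ i, v i ^ 2 := by
    obtain ⟨i0, hi0⟩ : ∃ i, v i ≠ 0 := by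
      by_contra h
      push_neg at h
      exact hv (funext fun i => h i)
    exact Finset.sum_pos' (fun i _ => sq_nonneg _)
      ⟨i0, Finset.mem_univ _, by positivity⟩
  -- column sums of the Laplacian vanish
  have hcolsum : ∀ j, ∑ i, (G.lapMatrix ℝ) i j = 0 := by
    intro j
    have h1 : ∀ i, (G.lapMatrix ℝ) i j = (G.lapMatrix ℝ) j i := fun i =>
      Matrix.IsSymm.apply (G.isSymm_lapMatrix (R := ℝ)) j i
    calc ∑ i, (G.lapMatrix ℝ) i j = ∑ i, (G.lapMatrix ℝ) j i := by simp_rw [h1]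
      _ = Matrix.mulVec (G.lapMatrix ℝ) (fun _ => 1) j := by
          simp [Matrix.mulVec, dotProduct]
      _ = 0 := by rw [G.lapMatrix_mulVec_const_eq_zero]; rfl
  have hvsum : ∑ i, v i = 0 := by
    have h2 : ∑ i, Matrix.mulVec (G.lapMatrix ℝ) v i = μ * ∑ i, v i := by
      rw [heig]
      simp [Finset.mul_sum]
    have h3 : ∑ i, Matrix.mulVec (G.lapMatrix ℝ) v i = 0 := by
      simp only [Matrix.mulVec, dotProduct]
      rw [Finset.sum_comm]
      have : ∀ j, (∑ i : Fin N, (G.lapMatrix ℝ) i j * v j) = 0 := by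
        intro j
        rw [← Finset.sum_mul, hcolsum j, zero_mul]
      rw [Finset.sum_congr rfl fun j _ => this j, Finset.sum_const_zero]
    rw [h3] at h2
    exact (mul_eq_zero.mp h2.symm).resolve_left hμ
  -- Rayleigh identity
  have hQ : (∑ i, ∑ j, if G.Adj i j then (v i - v j) ^ 2 else 0) / 2
      = μ * ∑ i, v i ^ 2 := by
    rw [← SimpleGraph.lapMatrix_toLinearMap₂', Matrix.toLinearMap₂'_apply', heig]
    simp only [dotProduct, Pi.smul_apply, smul_eq_mul]
    rw [Finset.mul_sum]
    exact Finset.sum_congr rfl fun i _ => by ring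
  -- sorted rearrangement
  set σ : Equiv.Perm (Fin N) := Tuple.sort v with hσ
  set y : ℕ → ℝ := fun k => if h : k < N then v (σ ⟨k, h⟩) else 0 with hy
  have hy_mono : ∀ a b : ℕ, a ≤ b → b < N → y a ≤ y b := by
    intro a b hab hb
    have ha : a < N := lt_of_le_of_lt hab hb
    simp only [hy]
    rw [dif_pos ha, dif_pos hb]
    exact Tuple.monotone_sort v (show (⟨a, ha⟩ : Fin N) ≤ ⟨b, hb⟩ from hab)
  have hy_eq : ∀ i : Fin N, y (i : ℕ) = v (σ i) := by
    intro i
    simp only [hy]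
    rw [dif_pos i.isLt]
  have hysum : ∑ k ∈ Finset.range N, y k = ∑ i, v i := by
    rw [← Fin.sum_univ_eq_sum_range]
    rw [Finset.sum_congr rfl fun i _ => hy_eq i]
    exact Equiv.sum_comp σ v
  have hysq : ∑ k ∈ Finset.range N, y k ^ 2 = ∑ i, v i ^ 2 := by
    rw [← Fin.sum_univ_eq_sum_range]
    rw [Finset.sum_congr rfl fun (i : Fin N) _ => by rw [hy_eq i]]
    exact Equiv.sum_comp σ (fun i => v i ^ 2)
  -- crossing edges
  have hcross : ∀ k : ℕ, k + 1 < N → ∃ p : Fin N × Fin N,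
      G.Adj p.1 p.2 ∧ v p.1 ≤ y k ∧ y (k + 1) ≤ v p.2 := by
    intro k hk
    set S : Set (Fin N) := {i | ((σ.symm i : Fin N) : ℕ) ≤ k} with hSdef
    have ha : σ ⟨k, by omega⟩ ∈ S := by
      simp only [hSdef, Set.mem_setOf_eq, Equiv.symm_apply_apply]
      exact le_rfl
    have hb : σ ⟨k + 1, hk⟩ ∉ S := by
      simp only [hSdef, Set.mem_setOf_eq, Equiv.symm_apply_apply]
      omega
    obtain ⟨W⟩ := hconn.preconnected (σ ⟨k, by omega⟩) (σ ⟨k + 1, hk⟩)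
    obtain ⟨d, _, hd1, hd2⟩ := W.exists_boundary_dart S ha hb
    have hfst : v d.fst = y ((σ.symm d.fst : Fin N) : ℕ) := by
      rw [hy_eq (σ.symm d.fst), Equiv.apply_symm_apply]
    have hsnd : v d.snd = y ((σ.symm d.snd : Fin N) : ℕ) := by
      rw [hy_eq (σ.symm d.snd), Equiv.apply_symm_apply]
    refine ⟨(d.fst, d.snd), d.adj, ?_, ?_⟩
    · rw [hfst]
      exact hy_mono _ k hd1 (by omega)
    · rw [hsnd]
      have h2 : k + 1 ≤ ((σ.symm d.snd : Fin N) : ℕ) := by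
        simp only [hSdef, Set.mem_setOf_eq] at hd2
        omega
      exact hy_mono (k + 1) _ h2 (σ.symm d.snd).isLt
  -- choice of crossing edge for each gap
  set c : ℕ → Fin N × Fin N := fun k =>
    if h : k + 1 < N then (hcross k h).choose else (⟨0, hNpos⟩, ⟨0, hNpos⟩) with hcdef
  have hc : ∀ k : ℕ, k + 1 < N →
      G.Adj (c k).1 (c k).2 ∧ v (c k).1 ≤ y k ∧ y (k + 1) ≤ v (c k).2 := by
    intro k h
    simp only [hcdef, dif_pos h]
    exact (hcross k h).choose_spec
  -- gaps
  set g : ℕ → ℝ := fun k => y (k + 1) - y k with hg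
  have hg_nonneg : ∀ k : ℕ, k + 1 < N → 0 ≤ g k := by
    intro k h
    simp only [hg]
    exact sub_nonneg.mpr (hy_mono k (k + 1) (Nat.le_succ k) h)
  set K : Finset ℕ := (Finset.range (N - 1)).filter (fun k => 0 < g k) with hK
  have hKsub : ∀ k ∈ K, k < N - 1 ∧ 0 < g k := by
    intro k hk
    rw [hK, Finset.mem_filter, Finset.mem_range] at hk
    exact hk
  have step1 : ∑ k ∈ Finset.range (N - 1), g k ^ 2 = ∑ k ∈ K, g k ^ 2 := by
    rw [hK]
    refine (Finset.sum_filter_of_ne ?_).symm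
    intro k hk hne
    have hkr : k < N - 1 := Finset.mem_range.mp hk
    have := hg_nonneg k (by omega)
    rcases lt_or_eq_of_le this with h | h
    · exact h
    · exact absurd (by rw [← h]; ring) hne
  set P : Finset (Fin N × Fin N) := K.image c with hP
  have step2 : ∑ k ∈ K, g k ^ 2
      = ∑ p ∈ P, ∑ k ∈ K.filter (fun k => c k = p), g k ^ 2 :=
    (Finset.sum_fiberwise_of_maps_to (fun k hk => Finset.mem_image_of_mem c hk) _).symm
  have step3 : ∀ p ∈ P, ∑ k ∈ K.filter (fun k => c k = p), g k ^ 2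
      ≤ (v p.2 - v p.1) ^ 2 := by
    intro p hp
    set T : Finset ℕ := K.filter (fun k => c k = p) with hT
    have hTne : T.Nonempty := by
      obtain ⟨k0, hk0, hck0⟩ := Finset.mem_image.mp hp
      exact ⟨k0, Finset.mem_filter.mpr ⟨hk0, hck0⟩⟩
    have hTfacts : ∀ k ∈ T, k < N - 1 ∧ 0 < g k ∧ v p.1 ≤ y k ∧ y (k + 1) ≤ v p.2 := by
      intro k hk
      rw [hT, Finset.mem_filter] at hk
      obtain ⟨hkK, hckp⟩ := hk
      obtain ⟨hkr, hgk⟩ := hKsub k hkK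
      have h1 := hc k (by omega)
      rw [hckp] at h1
      exact ⟨hkr, hgk, h1.2.1, h1.2.2⟩
    set a : ℕ := T.min' hTne with hadef
    set b : ℕ := T.max' hTne with hbdef
    have haT : a ∈ T := T.min'_mem hTne
    have hbT : b ∈ T := T.max'_mem hTne
    have hbN : b < N - 1 := (hTfacts b hbT).1
    have hsum_le : ∑ k ∈ T, g k ≤ v p.2 - v p.1 := by
      have h1 : ∑ k ∈ T, g k ≤ ∑ k ∈ Finset.Icc a b, g k := by
        apply Finset.sum_le_sum_of_subset_of_nonneg
        · intro k hk
          exact Finset.mem_Icc.mpr ⟨Finset.min'_le T k hk, Finset.le_max' T k hk⟩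
        · intro k hk _
          have hkb : k ≤ b := (Finset.mem_Icc.mp hk).2
          exact hg_nonneg k (by omega)
      have h2 : ∑ k ∈ Finset.Icc a b, g k = y (b + 1) - y a := by
        simp only [hg]
        rw [← Finset.Ico_add_one_right_eq_Icc, Finset.sum_Ico_eq_sum_range]
        have h3 := Finset.sum_range_sub (fun i => y (a + i)) (b + 1 - a)
        rw [show a + (b + 1 - a) = b + 1 by
          have := Finset.min'_le T b hbT
          omega, Nat.add_zero] at h3
        exact h3
      have hb1 : y (b + 1) ≤ v p.2 := (hTfacts b hbT).2.2.2
      have ha1 : v p.1 ≤ y a := (hTfacts a haT).2.2.1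
      linarith
    have h0 : 0 ≤ ∑ k ∈ T, g k :=
      Finset.sum_nonneg fun k hk => (hTfacts k hk).2.1.le
    calc ∑ k ∈ T, g k ^ 2 ≤ (∑ k ∈ T, g k) ^ 2 :=
          Finset.sum_sq_le_sq_sum_of_nonneg fun k hk => (hTfacts k hk).2.1.le
      _ ≤ (v p.2 - v p.1) ^ 2 := by
          apply pow_le_pow_left₀ h0 hsum_le
  -- bound the image sum by the Rayleigh quotient
  set Plt : Finset (Fin N × Fin N) :=
    Finset.univ.filter (fun p => G.Adj p.1 p.2 ∧ v p.1 < v p.2) with hPltdef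
  have hPsub : P ⊆ Plt := by
    intro p hp
    obtain ⟨k0, hk0K, hck0⟩ := Finset.mem_image.mp hp
    obtain ⟨hkr, hgk⟩ := hKsub k0 hk0K
    have h1 := hc k0 (by omega)
    rw [hck0] at h1
    refine Finset.mem_filter.mpr ⟨Finset.mem_univ _, h1.1, ?_⟩
    have h2 := h1.2.1
    have h3 := h1.2.2
    have h4 : g k0 = y (k0 + 1) - y k0 := by simp only [hg]
    rw [h4] at hgk
    linarith
  have step4 : ∑ p ∈ P, (v p.2 - v p.1) ^ 2 ≤ ∑ p ∈ Plt, (v p.2 - v p.1) ^ 2 :=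
    Finset.sum_le_sum_of_subset_of_nonneg hPsub fun p _ _ => sq_nonneg _
  have step5 : ∑ p ∈ Plt, (v p.2 - v p.1) ^ 2
      ≤ (∑ i, ∑ j, if G.Adj i j then (v i - v j) ^ 2 else 0) / 2 := by
    set F : Fin N × Fin N → ℝ :=
      fun p => if G.Adj p.1 p.2 then (v p.1 - v p.2) ^ 2 else 0 with hF
    have hFnn : ∀ p, 0 ≤ F p := by
      intro p
      simp only [hF]
      split
      · positivity
      · exact le_refl 0
    have htot : ∑ i, ∑ j, (if G.Adj i j then (v i - v j) ^ 2 else 0)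
        = ∑ p : Fin N × Fin N, F p := by
      rw [Fintype.sum_prod_type]
    have hPlt_eq : ∑ p ∈ Plt, (v p.2 - v p.1) ^ 2 = ∑ p ∈ Plt, F p := by
      refine Finset.sum_congr rfl fun p hp => ?_
      have hadj : G.Adj p.1 p.2 := ((Finset.mem_filter.mp hp).2).1
      simp only [hF]
      rw [if_pos hadj]
      ring
    set Pgt : Finset (Fin N × Fin N) :=
      Finset.univ.filter (fun p => G.Adj p.1 p.2 ∧ v p.2 < v p.1) with hPgtdef
    have hswap : ∑ p ∈ Pgt, F p = ∑ p ∈ Plt, F p := by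
      refine Finset.sum_nbij' (fun p => (p.2, p.1)) (fun p => (p.2, p.1)) ?_ ?_ ?_ ?_ ?_
      · intro p hp
        obtain ⟨-, h1, h2⟩ := Finset.mem_filter.mp hp
        exact Finset.mem_filter.mpr ⟨Finset.mem_univ _, h1.symm, h2⟩
      · intro p hp
        obtain ⟨-, h1, h2⟩ := Finset.mem_filter.mp hp
        exact Finset.mem_filter.mpr ⟨Finset.mem_univ _, h1.symm, h2⟩
      · intro p _; rfl
      · intro p _; rfl
      · intro p hp
        obtain ⟨-, h1, h2⟩ := Finset.mem_filter.mp hp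
        simp only [hF]
        rw [if_pos h1, if_pos h1.symm]
        ring
    have hdisj : Disjoint Plt Pgt := by
      rw [Finset.disjoint_left]
      intro p hp hq
      obtain ⟨-, -, h2⟩ := Finset.mem_filter.mp hp
      obtain ⟨-, -, h4⟩ := Finset.mem_filter.mp hq
      exact absurd h4 (not_lt.mpr h2.le)
    have hunion : ∑ p ∈ Plt, F p + ∑ p ∈ Pgt, F p ≤ ∑ p : Fin N × Fin N, F p := by
      rw [← Finset.sum_union hdisj]
      exact Finset.sum_le_sum_of_subset_of_nonneg (Finset.subset_univ _)
        fun p _ _ => hFnn p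
    rw [htot, hPlt_eq]
    linarith
  -- assemble
  have hQchain : ∑ k ∈ Finset.range (N - 1), g k ^ 2 ≤ μ * ∑ i, v i ^ 2 := by
    calc ∑ k ∈ Finset.range (N - 1), g k ^ 2
        = ∑ p ∈ P, ∑ k ∈ K.filter (fun k => c k = p), g k ^ 2 := by rw [step1, step2]
      _ ≤ ∑ p ∈ P, (v p.2 - v p.1) ^ 2 := Finset.sum_le_sum step3
      _ ≤ ∑ p ∈ Plt, (v p.2 - v p.1) ^ 2 := step4
      _ ≤ (∑ i, ∑ j, if G.Adj i j then (v i - v j) ^ 2 else 0) / 2 := step5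
      _ = μ * ∑ i, v i ^ 2 := hQ
  have hy0 : ∑ k ∈ Finset.range N, y k = 0 := by rw [hysum, hvsum]
  have hpath := FiedlerAux.path_wirtinger N hN y hy0
  have hfinal : 2 * (1 - Real.cos (Real.pi / N)) * ∑ i, v i ^ 2 ≤ μ * ∑ i, v i ^ 2 := by
    calc 2 * (1 - Real.cos (Real.pi / N)) * ∑ i, v i ^ 2
        = 2 * (1 - Real.cos (Real.pi / N)) * ∑ k ∈ Finset.range N, y k ^ 2 := by rw [hysq]
      _ ≤ ∑ k ∈ Finset.range (N - 1), (y (k + 1) - y k) ^ 2 := hpath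
      _ = ∑ k ∈ Finset.range (N - 1), g k ^ 2 := by simp only [hg]
      _ ≤ μ * ∑ i, v i ^ 2 := hQchain
  exact le_of_mul_le_mul_right hfinal hS
end

section
/- The Laplacian of a pseudo-connected graph is positive definite. -/
/-- The Laplacian of a graph with self-loops: the Laplacian of the self-loop-free
part plus `e_i e_iᵀ` for each self-loop `(i,i)`, encoded as loop set `s`. -/
def loopLaplacian {N : ℕ} (G : SimpleGraph (Fin N)) [DecidableRel G.Adj]
    (s : Finset (Fin N)) : Matrix (Fin N) (Fin N) ℝ :=
  G.lapMatrix ℝ + Matrix.diagonal (fun i => if i ∈ s then 1 else 0)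

/-- A graph with self-loops (simple graph `G` with loop set `s`) is pseudo-connected
if every vertex is incident to an edge (a self-loop or an edge to another vertex) and
every connected component contains a vertex with a self-loop. -/
def PseudoConnected {N : ℕ} (G : SimpleGraph (Fin N)) (s : Finset (Fin N)) : Prop :=
  (∀ v, v ∈ s ∨ ∃ u, G.Adj v u) ∧ (∀ v, ∃ u ∈ s, G.Reachable v u)

open Matrix in
/-- The Laplacian of a pseudo-connected graph is positive definite. -/
theorem loopLaplacian_posDef_of_pseudoConnected
    {N : ℕ} (G : SimpleGraph (Fin N)) [DecidableRel G.Adj]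
    (s : Finset (Fin N)) (h : PseudoConnected G s) :
    (loopLaplacian G s).PosDef := by
  classical
  obtain ⟨-, hreach⟩ := h
  have hlap := SimpleGraph.posSemidef_lapMatrix ℝ G
  rw [Matrix.posDef_iff_dotProduct_mulVec]
  constructor
  · exact hlap.1.add (Matrix.isHermitian_diagonal _)
  · intro x hx
    rw [loopLaplacian, Matrix.add_mulVec, dotProduct_add, star_trivial]
    have hqD : x ⬝ᵥ (Matrix.diagonal (fun i => if i ∈ s then 1 else 0)) *ᵥ x
        = ∑ i ∈ s, x i * x i := by
      simp [dotProduct, Matrix.mulVec_diagonal, mul_ite, mul_one, mul_zero,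
        ite_mul, zero_mul, Finset.sum_ite_mem, Finset.univ_inter, mul_comm]
    have hA : 0 ≤ x ⬝ᵥ G.lapMatrix ℝ *ᵥ x := by
      have := hlap.dotProduct_mulVec_nonneg x; rwa [star_trivial] at this
    have hD : 0 ≤ x ⬝ᵥ (Matrix.diagonal (fun i => if i ∈ s then 1 else 0)) *ᵥ x := by
      rw [hqD]; exact Finset.sum_nonneg fun i _ => mul_self_nonneg _
    rcases lt_or_eq_of_le (add_nonneg hA hD) with hlt | heq
    · exact hlt
    · exfalso
      have hA0 : x ⬝ᵥ G.lapMatrix ℝ *ᵥ x = 0 := le_antisymm (by linarith) hA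
      have hD0 : ∑ i ∈ s, x i * x i = 0 := by
        rw [← hqD]; linarith
      have hconst : ∀ i j : Fin N, G.Reachable i j → x i = x j := by
        rw [← SimpleGraph.lapMatrix_toLinearMap₂'_apply'_eq_zero_iff_forall_reachable]
        rwa [Matrix.toLinearMap₂'_apply']
      have hzero : ∀ i ∈ s, x i = 0 := by
        intro i hi
        have := (Finset.sum_eq_zero_iff_of_nonneg
          (fun j _ => mul_self_nonneg (x j))).mp hD0 i hi
        exact mul_self_eq_zero.mp this
      apply hx
      funext v
      obtain ⟨u, hu, hr⟩ := hreach v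
      simp [hconst v u hr, hzero u hu]
end

section
/- Let G be a finite undirected graph on N vertices with self-loops but no multiple edges, and let Ĝ be its lifted graph on 2N+1 vertices. Then every eigenvalue ψ of L(G) is an eigenvalue of L(Ĝ): if L(G)v = ψv, then the vector (v, 0, -v) ∈ ℝ^{2N+1} is an eigenvector of L(Ĝ) with eigenvalue ψ. -/
/-- The lifted graph of a graph with self-loops `(G, s)` on `N` vertices: a simple
graph on `2N + 1` vertices (two copies of the vertex set plus a middle vertex).
Each non-loop edge `(i,j)` yields edges `(i,j)` and `(i+N+1, j+N+1)`; each
self-loop `(i,i)` yields edges `(i, N+1)` and `(N+1, i+N+1)`, where `N+1` denotes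
the middle vertex. -/
def liftedGraph {N : ℕ} (G : SimpleGraph (Fin N)) (s : Finset (Fin N)) :
    SimpleGraph (Fin N ⊕ Unit ⊕ Fin N) where
  Adj a b :=
    match a, b with
    | Sum.inl i, Sum.inl j => G.Adj i j
    | Sum.inl i, Sum.inr (Sum.inl _) => i ∈ s
    | Sum.inr (Sum.inl _), Sum.inl i => i ∈ s
    | Sum.inr (Sum.inl _), Sum.inr (Sum.inr i) => i ∈ s
    | Sum.inr (Sum.inr i), Sum.inr (Sum.inl _) => i ∈ s
    | Sum.inr (Sum.inr i), Sum.inr (Sum.inr j) => G.Adj i j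
    | _, _ => False
  symm := by
    constructor
    rintro (i | u | i) (j | v | j) h <;>
      first | exact h.symm | exact h | cases h
  loopless := by
    constructor
    rintro (i | u | i) h <;> first | exact G.irrefl h | cases h

noncomputable instance {N : ℕ} (G : SimpleGraph (Fin N)) (s : Finset (Fin N)) :
    DecidableRel (liftedGraph G s).Adj := Classical.decRel _

/-- The Laplacian of the lifted graph (an ordinary loopless graph Laplacian). -/
noncomputable def liftedLaplacian {N : ℕ} (G : SimpleGraph (Fin N))
    (s : Finset (Fin N)) : Matrix (Fin N ⊕ Unit ⊕ Fin N) (Fin N ⊕ Unit ⊕ Fin N) ℝ :=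
  (liftedGraph G s).lapMatrix ℝ

lemma lap_sum {V : Type*} [Fintype V] [DecidableEq V] (G : SimpleGraph V)
    [DecidableRel G.Adj] (x : V → ℝ) (a : V) :
    (G.lapMatrix ℝ).mulVec x a = ∑ b, if G.Adj a b then x a - x b else 0 := by
  rw [SimpleGraph.lapMatrix_mulVec_apply]
  have hd : (G.degree a : ℝ) * x a = ∑ b, if G.Adj a b then x a else 0 := by
    rw [Finset.sum_ite, Finset.sum_const, Finset.sum_const]
    simp [SimpleGraph.degree, SimpleGraph.neighborFinset_eq_filter, mul_comm]
  have hn : ∑ u ∈ G.neighborFinset a, x u = ∑ b, if G.Adj a b then x b else 0 := by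
    rw [SimpleGraph.neighborFinset_eq_filter, Finset.sum_filter]
  rw [hd, hn, ← Finset.sum_sub_distrib]
  congr 1; ext b; split <;> simp

/-- Every eigenvalue `ψ` of `L(G)` is an eigenvalue of the Laplacian of the lifted
graph `Ĝ`: if `L(G) v = ψ v` with `v ≠ 0`, then `(v, 0, -v)` is a (nonzero)
eigenvector of `L(Ĝ)` with eigenvalue `ψ`. -/
theorem lifted_laplacian_eigenvalue
    {N : ℕ} (G : SimpleGraph (Fin N)) [DecidableRel G.Adj]
    (s : Finset (Fin N)) (hs : s.Nonempty)
    (ψ : ℝ) (v : Fin N → ℝ) (hv : v ≠ 0)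
    (heig : (loopLaplacian G s).mulVec v = ψ • v) :
    Sum.elim v (Sum.elim (fun _ : Unit => (0:ℝ)) (-v)) ≠ 0 ∧
      (liftedLaplacian G s).mulVec (Sum.elim v (Sum.elim (fun _ : Unit => (0:ℝ)) (-v))) =
        ψ • Sum.elim v (Sum.elim (fun _ : Unit => (0:ℝ)) (-v)) := by

  have hlap : ∀ i, (∑ j, if G.Adj i j then v i - v j else 0)
      + (if i ∈ s then v i else 0) = ψ * v i := by
    intro i
    have h := congrFun heig i
    simp only [loopLaplacian, Matrix.add_mulVec, Pi.add_apply, Pi.smul_apply,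
      smul_eq_mul, Matrix.mulVec_diagonal, lap_sum] at h
    rw [← h]
    congr 1
    split <;> simp
  constructor
  · obtain ⟨i, hi⟩ := Function.ne_iff.mp hv
    intro h
    exact hi (by simpa using congrFun h (Sum.inl i))
  · funext a
    rw [liftedLaplacian, lap_sum, Fintype.sum_sum_type, Fintype.sum_sum_type]
    match a with
    | Sum.inl i =>
      simp only [liftedGraph, Sum.elim_inl, Sum.elim_inr, Pi.neg_apply,
        Finset.univ_unique, Finset.sum_singleton, Pi.smul_apply, smul_eq_mul]
      rw [← hlap i]
      simp [sub_zero]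
      exact Finset.sum_congr rfl (fun j _ => by congr)
    | Sum.inr (Sum.inl u) =>
      simp only [liftedGraph, Sum.elim_inl, Sum.elim_inr, Pi.neg_apply,
        Finset.univ_unique, Finset.sum_singleton, Pi.smul_apply, smul_eq_mul]
      simp [Finset.sum_ite, Finset.sum_neg_distrib]
    | Sum.inr (Sum.inr i) =>
      simp only [liftedGraph, Sum.elim_inl, Sum.elim_inr, Pi.neg_apply,
        Finset.univ_unique, Finset.sum_singleton, Pi.smul_apply, smul_eq_mul,
        if_false]
      have h2 : -(ψ * v i) = -((∑ j, if G.Adj i j then v i - v j else 0)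
          + (if i ∈ s then v i else 0)) := by rw [hlap i]
      have h3 : ∑ x, (if G.Adj i x then -v i - -v x else 0)
          = -∑ x, (if G.Adj i x then v i - v x else 0) := by
        rw [← Finset.sum_neg_distrib]
        exact Finset.sum_congr rfl (fun j _ => by split <;> ring)
      have h4 : (if i ∈ s then -v i - 0 else 0) = -(if i ∈ s then v i else 0) := by
        split <;> ring
      rw [Finset.sum_eq_zero, zero_add, mul_neg, h2, neg_add, ← h3, ← h4, add_comm]
      congr
      funext j
      congr
      intro j _
      exact if_neg id
end

section
/- For a finite undirected graph G with self-loops but no multiple edges, the spectrum of L(G) is contained in σ(L(Ĝ)) ∩ [0, 2·d(G°) + 1], where Ĝ is the lifted graph of G. -/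
open Finset Matrix

lemma lap_mulVec_eq_sum_adj {V : Type*} [Fintype V] [DecidableEq V]
    (H : SimpleGraph V) [DecidableRel H.Adj] (vec : V → ℝ) (x : V) :
    (H.lapMatrix ℝ *ᵥ vec) x = ∑ y, (H.adjMatrix ℝ) x y * (vec x - vec y) := by
  rw [SimpleGraph.lapMatrix_mulVec_apply]
  have h1 : ∑ y, (H.adjMatrix ℝ) x y = (H.degree x : ℝ) := by
    have := SimpleGraph.adjMatrix_mulVec_const_apply (α := ℝ) (G := H) (a := (1:ℝ)) (v := x)
    simpa [Matrix.mulVec, dotProduct] using this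
  have h2 : ∑ y, (H.adjMatrix ℝ) x y * vec y = ∑ u ∈ H.neighborFinset x, vec u := by
    have := SimpleGraph.adjMatrix_mulVec_apply (α := ℝ) (G := H) x vec
    simpa [Matrix.mulVec, dotProduct] using this
  simp only [mul_sub, Finset.sum_sub_distrib, ← Finset.sum_mul, h1, h2]

section liftedAdj
variable {N : ℕ} {G : SimpleGraph (Fin N)} {s : Finset (Fin N)}

@[simp] lemma lifted_adj_inl_inl {i j : Fin N} :
    (liftedGraph G s).Adj (Sum.inl i) (Sum.inl j) ↔ G.Adj i j := Iff.rfl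
@[simp] lemma lifted_adj_inl_mid {i : Fin N} {u : Unit} :
    (liftedGraph G s).Adj (Sum.inl i) (Sum.inr (Sum.inl u)) ↔ i ∈ s := Iff.rfl
@[simp] lemma lifted_adj_inl_inr {i j : Fin N} :
    (liftedGraph G s).Adj (Sum.inl i) (Sum.inr (Sum.inr j)) ↔ False := Iff.rfl
@[simp] lemma lifted_adj_mid_inl {u : Unit} {i : Fin N} :
    (liftedGraph G s).Adj (Sum.inr (Sum.inl u)) (Sum.inl i) ↔ i ∈ s := Iff.rfl
@[simp] lemma lifted_adj_mid_mid {u u' : Unit} :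
    (liftedGraph G s).Adj (Sum.inr (Sum.inl u)) (Sum.inr (Sum.inl u')) ↔ False := Iff.rfl
@[simp] lemma lifted_adj_mid_inr {u : Unit} {i : Fin N} :
    (liftedGraph G s).Adj (Sum.inr (Sum.inl u)) (Sum.inr (Sum.inr i)) ↔ i ∈ s := Iff.rfl
@[simp] lemma lifted_adj_inr_inl {i j : Fin N} :
    (liftedGraph G s).Adj (Sum.inr (Sum.inr i)) (Sum.inl j) ↔ False := Iff.rfl
@[simp] lemma lifted_adj_inr_mid {i : Fin N} {u : Unit} :
    (liftedGraph G s).Adj (Sum.inr (Sum.inr i)) (Sum.inr (Sum.inl u)) ↔ i ∈ s := Iff.rfl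
@[simp] lemma lifted_adj_inr_inr {i j : Fin N} :
    (liftedGraph G s).Adj (Sum.inr (Sum.inr i)) (Sum.inr (Sum.inr j)) ↔ G.Adj i j := Iff.rfl

end liftedAdj

/-- Spectrum inclusion: for a finite undirected graph `G` with self-loops but no
multiple edges, every eigenvalue of `L(G)` is an eigenvalue of the Laplacian of
the lifted graph `Ĝ` and lies in `[0, 2·d(G°) + 1]`. -/
theorem loopLaplacian_spectrum_subset
    {N : ℕ} (G : SimpleGraph (Fin N)) [DecidableRel G.Adj]
    (s : Finset (Fin N))
    (μ : ℝ) (v : Fin N → ℝ) (hv : v ≠ 0)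
    (heig : (loopLaplacian G s).mulVec v = μ • v) :
    (∃ w : Fin N ⊕ Unit ⊕ Fin N → ℝ, w ≠ 0 ∧
        (liftedLaplacian G s).mulVec w = μ • w) ∧
      μ ∈ Set.Icc (0 : ℝ) (2 * G.maxDegree + 1) := by
  classical
  have key : ∀ i, (G.lapMatrix ℝ *ᵥ v) i + (if i ∈ s then 1 else 0) * v i = μ * v i := by
    intro i
    have := congrFun heig i
    simpa [loopLaplacian, Matrix.add_mulVec, Matrix.mulVec_diagonal, mul_comm] using this
  have hGsum : ∀ i, (G.lapMatrix ℝ *ᵥ v) i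
      = ∑ j, (if G.Adj i j then (1:ℝ) else 0) * (v i - v j) := by
    intro i
    simpa [SimpleGraph.adjMatrix_apply] using lap_mulVec_eq_sum_adj G v i
  constructor
  · refine ⟨Sum.elim v (Sum.elim (fun _ => 0) (fun i => -v i)), ?_, ?_⟩
    · obtain ⟨i, hi⟩ := Function.ne_iff.mp hv
      intro h
      exact hi (congrFun h (Sum.inl i))
    · funext x
      rw [liftedLaplacian, lap_mulVec_eq_sum_adj]
      rcases x with i | u | i
      · simp only [Fintype.sum_sum_type, Finset.univ_unique, Finset.sum_singleton,
          SimpleGraph.adjMatrix_apply, lifted_adj_inl_inl, lifted_adj_inl_mid,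
          lifted_adj_inl_inr, Sum.elim_inl, Sum.elim_inr, Pi.smul_apply, smul_eq_mul,
          if_false, zero_mul, Finset.sum_const_zero, sub_zero, add_zero]
        linear_combination key i - hGsum i
      · simp only [Fintype.sum_sum_type, Finset.univ_unique, Finset.sum_singleton,
          SimpleGraph.adjMatrix_apply, lifted_adj_mid_inl, lifted_adj_mid_mid,
          lifted_adj_mid_inr, Sum.elim_inl, Sum.elim_inr, Pi.smul_apply, smul_eq_mul,
          if_false, zero_mul, zero_sub, sub_neg_eq_add, zero_add, mul_zero, add_zero]
        rw [← Finset.sum_add_distrib]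
        refine Finset.sum_eq_zero fun j _ => by ring
      · simp only [Fintype.sum_sum_type, Finset.univ_unique, Finset.sum_singleton,
          SimpleGraph.adjMatrix_apply, lifted_adj_inr_inl, lifted_adj_inr_mid,
          lifted_adj_inr_inr, Sum.elim_inl, Sum.elim_inr, Pi.smul_apply, smul_eq_mul,
          if_false, zero_mul, Finset.sum_const_zero, sub_zero, zero_add]
        have hflip : ∑ j, (if G.Adj i j then (1:ℝ) else 0) * (-v i - -v j)
            = -∑ j, (if G.Adj i j then (1:ℝ) else 0) * (v i - v j) := by
          rw [← Finset.sum_neg_distrib]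
          exact Finset.sum_congr rfl fun j _ => by ring
        rw [hflip]
        linear_combination - key i + hGsum i
  · -- Gershgorin bound
    set M := loopLaplacian G s with hM
    have heigval : Module.End.HasEigenvalue (Matrix.toLin' M) μ := by
      apply Module.End.hasEigenvalue_of_hasEigenvector (x := v)
      refine ⟨Module.End.mem_eigenspace_iff.mpr ?_, hv⟩
      rw [Matrix.toLin'_apply, heig]
    obtain ⟨k, hk⟩ := eigenvalue_mem_ball heigval
    have hdiag : M k k = (G.degree k : ℝ) + (if k ∈ s then 1 else 0) := by
      simp [hM, loopLaplacian, SimpleGraph.lapMatrix, SimpleGraph.degMatrix, Matrix.diagonal]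
    have hrow : ∑ j ∈ Finset.univ.erase k, ‖M k j‖ = (G.degree k : ℝ) := by
      have hterm : ∀ j ∈ Finset.univ.erase k, ‖M k j‖ = (G.adjMatrix ℝ) k j := by
        intro j hj
        have hjk : j ≠ k := (Finset.mem_erase.mp hj).1
        have hMkj : M k j = -(G.adjMatrix ℝ) k j := by
          simp [hM, loopLaplacian, SimpleGraph.lapMatrix, SimpleGraph.degMatrix,
            Matrix.diagonal, hjk.symm]
        rw [hMkj, norm_neg]
        by_cases h : G.Adj k j <;> simp [h]
      rw [Finset.sum_congr rfl hterm, Finset.sum_erase _ (by simp)]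
      have := SimpleGraph.adjMatrix_mulVec_const_apply (α := ℝ) (G := G) (a := (1:ℝ)) (v := k)
      simpa [Matrix.mulVec, dotProduct] using this
    rw [Metric.mem_closedBall, Real.dist_eq, hrow, hdiag] at hk
    have habs := abs_le.mp hk
    have hdmax : (G.degree k : ℝ) ≤ (G.maxDegree : ℝ) := by
      exact_mod_cast G.degree_le_maxDegree k
    have hdeg0 : (0:ℝ) ≤ (G.degree k : ℝ) := by positivity
    have hloop0 : (0:ℝ) ≤ (if k ∈ s then (1:ℝ) else 0) := by positivity
    have hloop1 : (if k ∈ s then (1:ℝ) else 0) ≤ 1 := by split <;> norm_num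
    constructor
    · linarith [habs.1]
    · linarith [habs.2]
end

section
/- If G is a pseudo-connected graph, then every eigenvalue of L(G) is a strictly positive eigenvalue of the Laplacian L(Ĝ) of its lifted graph, and lies in (0, 2·d(G°) + 1]. -/
open Finset Matrix

lemma lap_mulVec_eq' {V : Type*} [Fintype V] [DecidableEq V] (H : SimpleGraph V)
    [DecidableRel H.Adj] (w : V → ℝ) (a : V) :
    (H.lapMatrix ℝ *ᵥ w) a = ∑ b, if H.Adj a b then w a - w b else 0 := by
  rw [SimpleGraph.lapMatrix_mulVec_apply]
  have h1 : (H.degree a : ℝ) * w a = ∑ b ∈ H.neighborFinset a, w a := by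
    simp [mul_comm]
  rw [h1, ← Finset.sum_sub_distrib, SimpleGraph.neighborFinset_eq_filter, Finset.sum_filter]

section pos
variable {N : ℕ} (G : SimpleGraph (Fin N)) [DecidableRel G.Adj] (s : Finset (Fin N))

lemma mu_pos (hpc : PseudoConnected G s)
    (μ : ℝ) (v : Fin N → ℝ) (hv : v ≠ 0)
    (heig : (loopLaplacian G s).mulVec v = μ • v) : 0 < μ := by
  classical
  have hvv : (0:ℝ) < v ⬝ᵥ v := by
    rcases (Finset.sum_nonneg (fun i _ => mul_self_nonneg (v i)) :
        (0:ℝ) ≤ v ⬝ᵥ v).lt_or_eq with h | h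
    · exact h
    · exact absurd ((dotProduct_self_eq_zero).mp h.symm) hv
  have hsplit : v ⬝ᵥ ((loopLaplacian G s) *ᵥ v)
      = v ⬝ᵥ (G.lapMatrix ℝ *ᵥ v)
        + ∑ i, v i * ((if i ∈ s then (1:ℝ) else 0) * v i) := by
    rw [loopLaplacian, Matrix.add_mulVec, dotProduct_add]
    congr 1
    simp only [dotProduct, Matrix.mulVec_diagonal]
  have hQlap : (0:ℝ) ≤ v ⬝ᵥ (G.lapMatrix ℝ *ᵥ v) := by
    simpa using (SimpleGraph.posSemidef_lapMatrix ℝ G).dotProduct_mulVec_nonneg v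
  have hterm : ∀ i ∈ Finset.univ, (0:ℝ) ≤ v i * ((if i ∈ s then (1:ℝ) else 0) * v i) := by
    intro i _
    split <;> simp [mul_self_nonneg]
  have hQdiag : (0:ℝ) ≤ ∑ i, v i * ((if i ∈ s then (1:ℝ) else 0) * v i) :=
    Finset.sum_nonneg hterm
  have hmu : v ⬝ᵥ ((loopLaplacian G s) *ᵥ v) = μ * (v ⬝ᵥ v) := by
    rw [heig]; simp [dotProduct_smul, smul_eq_mul]
  have hμ0 : 0 ≤ μ := by
    by_contra h
    push_neg at h
    nlinarith [hsplit, hQlap, hQdiag, hmu]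
  rcases hμ0.lt_or_eq with h | h
  · exact h
  exfalso
  -- μ = 0
  have hz : v ⬝ᵥ (G.lapMatrix ℝ *ᵥ v) + ∑ i, v i * ((if i ∈ s then (1:ℝ) else 0) * v i) = 0 := by
    rw [← hsplit, hmu, ← h, zero_mul]
  have hQlap0 : v ⬝ᵥ (G.lapMatrix ℝ *ᵥ v) = 0 := by linarith
  have hQdiag0 : ∑ i, v i * ((if i ∈ s then (1:ℝ) else 0) * v i) = 0 := by linarith
  have hreach : ∀ i j : Fin N, G.Reachable i j → v i = v j := by
    have := (SimpleGraph.lapMatrix_toLinearMap₂'_apply'_eq_zero_iff_forall_reachable G v).mp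
    apply this
    rw [Matrix.toLinearMap₂'_apply']
    exact hQlap0
  have hzero_s : ∀ i ∈ s, v i = 0 := by
    intro i hi
    have := (Finset.sum_eq_zero_iff_of_nonneg hterm).mp hQdiag0 i (Finset.mem_univ i)
    rw [if_pos hi, one_mul] at this
    exact mul_self_eq_zero.mp this
  apply hv
  funext j
  obtain ⟨u, hu, hru⟩ := hpc.2 j
  rw [Pi.zero_apply, hreach j u hru, hzero_s u hu]

end pos

section bound
variable {N : ℕ} (G : SimpleGraph (Fin N)) [DecidableRel G.Adj] (s : Finset (Fin N))

lemma mu_le (μ : ℝ) (hμ : 0 ≤ μ) (v : Fin N → ℝ) (hv : v ≠ 0)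
    (heig : (loopLaplacian G s).mulVec v = μ • v) :
    μ ≤ 2 * G.maxDegree + 1 := by
  classical
  have hne : (Finset.univ : Finset (Fin N)).Nonempty := by
    by_contra h
    apply hv
    funext i
    rw [Finset.not_nonempty_iff_eq_empty] at h
    exact absurd (Finset.mem_univ i) (by rw [h]; exact Finset.notMem_empty i)
  obtain ⟨i, _, hi⟩ := Finset.exists_max_image Finset.univ (fun j => |v j|) hne
  have hipos : 0 < |v i| := by
    rcases (abs_nonneg (v i)).lt_or_eq with h | h
    · exact h
    · exfalso; apply hv; funext j
      have := hi j (Finset.mem_univ j)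
      rw [← h] at this
      exact abs_nonpos_iff.mp this
  have hpt : (G.lapMatrix ℝ *ᵥ v) i + (if i ∈ s then 1 else 0) * v i = μ * v i := by
    have := congrFun heig i
    simpa [loopLaplacian, Matrix.add_mulVec, Matrix.mulVec_diagonal, mul_comm] using this
  rw [SimpleGraph.lapMatrix_mulVec_apply] at hpt
  have hB : |∑ u ∈ G.neighborFinset i, v u| ≤ (G.degree i : ℝ) * |v i| := by
    calc |∑ u ∈ G.neighborFinset i, v u| ≤ ∑ u ∈ G.neighborFinset i, |v u| :=
          Finset.abs_sum_le_sum_abs _ _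
      _ ≤ ∑ u ∈ G.neighborFinset i, |v i| :=
          Finset.sum_le_sum (fun u _ => hi u (Finset.mem_univ u))
      _ = (G.degree i : ℝ) * |v i| := by
          simp [SimpleGraph.card_neighborFinset_eq_degree, mul_comm]
  have hC : |(if i ∈ s then (1:ℝ) else 0) * v i| ≤ |v i| := by
    split <;> simp [abs_nonneg]
  have key : μ * |v i| ≤ (2 * (G.degree i : ℝ) + 1) * |v i| := by
    have h1 : μ * |v i| = |μ * v i| := by rw [abs_mul, abs_of_nonneg hμ]
    rw [h1, ← hpt]
    have := abs_add_le ((G.degree i : ℝ) * v i - ∑ u ∈ G.neighborFinset i, v u)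
      ((if i ∈ s then (1:ℝ) else 0) * v i)
    have h2 := abs_sub ((G.degree i : ℝ) * v i) (∑ u ∈ G.neighborFinset i, v u)
    have h3 : |(G.degree i : ℝ) * v i| = (G.degree i : ℝ) * |v i| := by
      rw [abs_mul, abs_of_nonneg (by positivity)]
    nlinarith [hB, hC]
  have hd : (G.degree i : ℝ) ≤ (G.maxDegree : ℝ) := by
    exact_mod_cast G.degree_le_maxDegree i
  have := (mul_le_mul_iff_left₀ hipos).mp key
  linarith

end bound

section lift
variable {N : ℕ} (G : SimpleGraph (Fin N)) [DecidableRel G.Adj] (s : Finset (Fin N))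

@[simp] lemma la_inl_inl (i j : Fin N) :
    (liftedGraph G s).Adj (Sum.inl i) (Sum.inl j) ↔ G.Adj i j := Iff.rfl
@[simp] lemma la_inl_mid (i : Fin N) (u : Unit) :
    (liftedGraph G s).Adj (Sum.inl i) (Sum.inr (Sum.inl u)) ↔ i ∈ s := Iff.rfl
@[simp] lemma la_inl_inr (i j : Fin N) :
    (liftedGraph G s).Adj (Sum.inl i) (Sum.inr (Sum.inr j)) ↔ False := Iff.rfl
@[simp] lemma la_mid_inl (u : Unit) (i : Fin N) :
    (liftedGraph G s).Adj (Sum.inr (Sum.inl u)) (Sum.inl i) ↔ i ∈ s := Iff.rfl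
@[simp] lemma la_mid_mid (u u' : Unit) :
    (liftedGraph G s).Adj (Sum.inr (Sum.inl u)) (Sum.inr (Sum.inl u')) ↔ False := Iff.rfl
@[simp] lemma la_mid_inr (u : Unit) (i : Fin N) :
    (liftedGraph G s).Adj (Sum.inr (Sum.inl u)) (Sum.inr (Sum.inr i)) ↔ i ∈ s := Iff.rfl
@[simp] lemma la_inr_inl (i j : Fin N) :
    (liftedGraph G s).Adj (Sum.inr (Sum.inr i)) (Sum.inl j) ↔ False := Iff.rfl
@[simp] lemma la_inr_mid (i : Fin N) (u : Unit) :
    (liftedGraph G s).Adj (Sum.inr (Sum.inr i)) (Sum.inr (Sum.inl u)) ↔ i ∈ s := Iff.rfl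
@[simp] lemma la_inr_inr (i j : Fin N) :
    (liftedGraph G s).Adj (Sum.inr (Sum.inr i)) (Sum.inr (Sum.inr j)) ↔ G.Adj i j := Iff.rfl

lemma lifted_eig (μ : ℝ) (v : Fin N → ℝ)
    (heig : (loopLaplacian G s).mulVec v = μ • v) :
    (liftedLaplacian G s).mulVec
      (Sum.elim v (Sum.elim (fun _ => 0) (fun i => -v i))) =
    μ • (Sum.elim v (Sum.elim (fun _ => 0) (fun i => -v i))) := by
  classical
  set w : Fin N ⊕ Unit ⊕ Fin N → ℝ := Sum.elim v (Sum.elim (fun _ => 0) (fun i => -v i))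
  have hpt : ∀ i, (∑ j, if G.Adj i j then v i - v j else 0)
      + (if i ∈ s then v i else 0) = μ * v i := by
    intro i
    have h0 := congrFun heig i
    simp only [loopLaplacian, Matrix.add_mulVec, Pi.add_apply, Matrix.mulVec_diagonal,
      Pi.smul_apply, smul_eq_mul] at h0
    rw [lap_mulVec_eq'] at h0
    rw [← h0]
    congr 1
    split <;> ring
  funext a
  rw [liftedLaplacian, lap_mulVec_eq']
  rw [Fintype.sum_sum_type, Fintype.sum_sum_type]
  rcases a with i | u | i
  · simp only [w, Sum.elim_inl, Sum.elim_inr, la_inl_inl, la_inl_mid, la_inl_inr,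
      if_false, Finset.sum_const_zero, Pi.smul_apply, smul_eq_mul]
    rw [add_zero]
    have hu : ∑ _u : Unit, (if i ∈ s then v i - 0 else 0) = (if i ∈ s then v i else 0) := by
      simp
    rw [hu]
    exact hpt i
  · simp only [w, Sum.elim_inl, Sum.elim_inr, la_mid_inl, la_mid_mid, la_mid_inr,
      if_false, Finset.sum_const_zero, Pi.smul_apply, smul_eq_mul, mul_zero]
    rw [zero_add, ← Finset.sum_add_distrib]
    apply Finset.sum_eq_zero
    intro j _
    split <;> ring
  · simp only [w, Sum.elim_inl, Sum.elim_inr, la_inr_inl, la_inr_mid, la_inr_inr,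
      if_false, Finset.sum_const_zero, Pi.smul_apply, smul_eq_mul]
    rw [zero_add]
    have hu : ∑ _u : Unit, (if i ∈ s then -v i - 0 else 0)
        = -(if i ∈ s then v i else 0) := by
      simp only [Finset.univ_unique, Finset.sum_singleton, sub_zero]
      split <;> simp
    have hS : ∑ j, (if G.Adj i j then -v i - -v j else 0)
        = -∑ j, (if G.Adj i j then v i - v j else 0) := by
      rw [← Finset.sum_neg_distrib]
      apply Finset.sum_congr rfl
      intro j _
      split <;> ring
    rw [hu, hS]
    have := hpt i
    ring_nf
    ring_nf at this
    linarith
end lift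

/-- If `G` is pseudo-connected, then every eigenvalue of `L(G)` is a strictly
positive eigenvalue of the Laplacian of the lifted graph `Ĝ` and lies in
`(0, 2·d(G°) + 1]`. -/
theorem loopLaplacian_spectrum_subset_of_pseudoConnected
    {N : ℕ} (G : SimpleGraph (Fin N)) [DecidableRel G.Adj]
    (s : Finset (Fin N)) (hpc : PseudoConnected G s)
    (μ : ℝ) (v : Fin N → ℝ) (hv : v ≠ 0)
    (heig : (loopLaplacian G s).mulVec v = μ • v) :
    (∃ w : Fin N ⊕ Unit ⊕ Fin N → ℝ, w ≠ 0 ∧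
        (liftedLaplacian G s).mulVec w = μ • w) ∧
      μ ∈ Set.Ioc (0 : ℝ) (2 * G.maxDegree + 1) := by
  have hpos := mu_pos G s hpc μ v hv heig
  refine ⟨⟨Sum.elim v (Sum.elim (fun _ => 0) (fun i => -v i)), ?_, lifted_eig G s μ v heig⟩,
    hpos, mu_le G s μ hpos.le v hv heig⟩
  intro h
  apply hv
  funext i
  exact congrFun h (Sum.inl i)
end
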